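/- Let B be a bicategory and W a class of arrows satisfying [WB1]–[WB5] whose arrows are all co-fully-faithful. Then the universal homomorphism J_W : B → B(W⁻¹) is 2-full and 2-faithful: for 1-morphisms f, g : A → B of B, the map from 2-cells f ⇒ g in B to 2-cells J_W(f) ⇒ J_W(g) in B(W⁻¹) is a bijection. -/

import Mathlib

open CategoryTheory Bicategory

universe w v u

/-- A class of 1-morphisms in a bicategory. -/
def WClass (B : Type u) [Bicategory.{w, v} B] :=
  ∀ ⦃a b : B⦄, (a ⟶ b) → Prop

namespace WClass

variable {B : Type u} [Bicategory.{w, v} B]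

/-- [WB1]: all identities are in `W`. -/
def WB1 (W : WClass B) : Prop := ∀ a : B, W (𝟙 a)

/-- [WB2]: for composable arrows of `W` there is a pre-composition landing in `W`. -/
def WB2 (W : WClass B) : Prop :=
  ∀ ⦃a b c : B⦄ (vm : a ⟶ b) (wm : b ⟶ c), W vm → W wm →
    ∃ (a' : B) (u : a' ⟶ a), W (u ≫ vm ≫ wm)

/-- [WB3]: squares with invertible fillers over cospans with one leg in `W`. -/
def WB3 (W : WClass B) : Prop :=
  ∀ ⦃a b c : B⦄ (wm : a ⟶ b) (f : c ⟶ b), W wm →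
    ∃ (d : B) (h : d ⟶ a) (vm : d ⟶ c), W vm ∧ Nonempty (h ≫ wm ≅ vm ≫ f)

/-- `β` is a lifting of the 2-cell `η : f ≫ wm ⟶ g ≫ wm` along `wm`, via `u`. -/
def IsLift ⦃a b c : B⦄ (f g : a ⟶ b) (wm : b ⟶ c) (η : f ≫ wm ⟶ g ≫ wm)
    ⦃a' : B⦄ (u : a' ⟶ a) (β : u ≫ f ⟶ u ≫ g) : Prop :=
  β ▷ wm = (α_ u f wm).hom ≫ u ◁ η ≫ (α_ u g wm).inv

/-- [WB4]: existence of liftings of 2-cells along arrows of `W`, together with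
the compatibility of any two such liftings. -/
def WB4 (W : WClass B) : Prop :=
  (∀ ⦃a b c : B⦄ (f g : a ⟶ b) (wm : b ⟶ c), W wm → ∀ η : f ≫ wm ⟶ g ≫ wm,
    ∃ (a' : B) (u : a' ⟶ a), W u ∧ ∃ β : u ≫ f ⟶ u ≫ g, IsLift f g wm η u β) ∧
  (∀ ⦃a b c : B⦄ (f g : a ⟶ b) (wm : b ⟶ c), W wm → ∀ η : f ≫ wm ⟶ g ≫ wm,
    ∀ ⦃a₁ : B⦄ (u₁ : a₁ ⟶ a) (β₁ : u₁ ≫ f ⟶ u₁ ≫ g), W u₁ → IsLift f g wm η u₁ β₁ →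
      ∀ ⦃a₂ : B⦄ (u₂ : a₂ ⟶ a) (β₂ : u₂ ≫ f ⟶ u₂ ≫ g), W u₂ → IsLift f g wm η u₂ β₂ →
        ∃ (d : B) (s : d ⟶ a₁) (t : d ⟶ a₂), W (s ≫ u₁) ∧ W (t ≫ u₂) ∧
          ∃ ε₀ : s ≫ u₁ ≅ t ≫ u₂,
            ((α_ s u₁ f).hom ≫ s ◁ β₁ ≫ (α_ s u₁ g).inv) ≫ ε₀.hom ▷ g =
              ε₀.hom ▷ f ≫ (α_ t u₂ f).hom ≫ t ◁ β₂ ≫ (α_ t u₂ g).inv)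

/-- [WB5]: `W` is closed under invertible 2-cells. -/
def WB5 (W : WClass B) : Prop :=
  ∀ ⦃a b : B⦄ (vm wm : a ⟶ b), W wm → Nonempty (vm ≅ wm) → W vm

end WClass

/-- A 1-morphism `wm` is co-fully-faithful if every 2-cell `wm ≫ f ⟶ wm ≫ g`
factors uniquely through right whiskering by `wm`. -/
def CoFF {B : Type u} [Bicategory.{w, v} B] ⦃a b : B⦄ (wm : a ⟶ b) : Prop :=
  ∀ ⦃c : B⦄ (f g : b ⟶ c) (η : wm ≫ f ⟶ wm ≫ g), ∃! η' : f ⟶ g, wm ◁ η' = η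

/-- A 1-morphism `wm` is co-full if every 2-cell `wm ≫ f ⟶ wm ≫ g`
factors (not necessarily uniquely) through right whiskering by `wm`. -/
def CoFull {B : Type u} [Bicategory.{w, v} B] ⦃a b : B⦄ (wm : a ⟶ b) : Prop :=
  ∀ ⦃c : B⦄ (f g : b ⟶ c) (η : wm ≫ f ⟶ wm ≫ g), ∃ η' : f ⟶ g, wm ◁ η' = η

/-- Equivalence of 2-cell diagrams between the spans `(u₁, f₁)` and `(u₂, f₂)` in the
construction of the bicategory of fractions: the diagram `(v₁, v₂, αc, β)` is equivalent
to the diagram `(v₁', v₂', αc', β')` when there is a common refinement `s, t` with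
invertible comparison 2-cells `ε₁, ε₂`, the relevant composite in `W`, satisfying the
two pasting equations. -/
def DiagEquiv {B : Type u} [Bicategory.{w, v} B] (W : WClass B)
    {a b c₁ c₂ : B} (u₁ : c₁ ⟶ a) (f₁ : c₁ ⟶ b) (u₂ : c₂ ⟶ a) (f₂ : c₂ ⟶ b)
    {d : B} (v₁ : d ⟶ c₁) (v₂ : d ⟶ c₂)
    (αc : v₁ ≫ u₁ ≅ v₂ ≫ u₂) (β : v₁ ≫ f₁ ⟶ v₂ ≫ f₂)
    {d' : B} (v₁' : d' ⟶ c₁) (v₂' : d' ⟶ c₂)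
    (αc' : v₁' ≫ u₁ ≅ v₂' ≫ u₂) (β' : v₁' ≫ f₁ ⟶ v₂' ≫ f₂) : Prop :=
  ∃ (e : B) (s : e ⟶ d) (t : e ⟶ d'),
    W ((s ≫ v₁) ≫ u₁) ∧
    ∃ (ε₁ : s ≫ v₁ ≅ t ≫ v₁') (ε₂ : s ≫ v₂ ≅ t ≫ v₂'),
      (ε₁.hom ▷ u₁ ≫ (α_ t v₁' u₁).hom ≫ t ◁ αc'.hom ≫ (α_ t v₂' u₂).inv =
        (α_ s v₁ u₁).hom ≫ s ◁ αc.hom ≫ (α_ s v₂ u₂).inv ≫ ε₂.hom ▷ u₂) ∧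
      (ε₁.hom ▷ f₁ ≫ (α_ t v₁' f₁).hom ≫ t ◁ β' ≫ (α_ t v₂' f₂).inv =
        (α_ s v₁ f₁).hom ≫ s ◁ β ≫ (α_ s v₂ f₂).inv ≫ ε₂.hom ▷ f₂)

theorem statement16 {B : Type u} [Bicategory.{w, v} B] (W : WClass B)
    (h1 : W.WB1) (h2 : W.WB2) (h3 : W.WB3) (h4 : W.WB4) (h5 : W.WB5)
    (hcoff : ∀ ⦃x y : B⦄ (f : x ⟶ y), W f → CoFF f)
    {a b : B} (f g : a ⟶ b) :
    (∀ {d : B} (v₁ : d ⟶ a) (v₂ : d ⟶ a)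
        (αc : v₁ ≫ 𝟙 a ≅ v₂ ≫ 𝟙 a), W (v₁ ≫ 𝟙 a) →
        ∀ β : v₁ ≫ f ⟶ v₂ ≫ g,
          ∃ γ : f ⟶ g,
            DiagEquiv W (𝟙 a) f (𝟙 a) g v₁ v₂ αc β
              (𝟙 a) (𝟙 a) (Iso.refl (𝟙 a ≫ 𝟙 a)) (𝟙 a ◁ γ)) ∧
    (∀ γ δ : f ⟶ g,
      DiagEquiv W (𝟙 a) f (𝟙 a) g (𝟙 a) (𝟙 a) (Iso.refl (𝟙 a ≫ 𝟙 a)) (𝟙 a ◁ γ)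
        (𝟙 a) (𝟙 a) (Iso.refl (𝟙 a ≫ 𝟙 a)) (𝟙 a ◁ δ) → γ = δ) := by
  constructor
  · intro d v₁ v₂ αc hWv β
    have hWv₁ : W v₁ := h5 v₁ (v₁ ≫ 𝟙 a) hWv ⟨(ρ_ v₁).symm⟩
    obtain ⟨γ, hγ, -⟩ :=
      hcoff v₁ hWv₁ f g (β ≫ ((ρ_ v₂).inv ≫ αc.inv ≫ (ρ_ v₁).hom) ▷ g)
    refine ⟨γ, d, 𝟙 d, v₁, ?_, (λ_ v₁) ≪≫ (ρ_ v₁).symm,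
      (λ_ v₂) ≪≫ (ρ_ v₂).symm ≪≫ αc.symm, ?_, ?_⟩
    · exact h5 _ _ hWv ⟨whiskerRightIso (λ_ v₁) (𝟙 a)⟩
    · simp [Bicategory.whiskerRight_id]
      have hC : (λ_ (v₂ ≫ 𝟙 a)).inv ≫ (α_ (𝟙 d) v₂ (𝟙 a)).inv ≫
          (ρ_ (𝟙 d ≫ v₂)).hom ≫ (λ_ v₂).hom ≫ (ρ_ v₂).inv = 𝟙 _ := by
        bicategory_coherence
      slice_rhs 4 8 => rw [hC]
      simp only [Category.id_comp, Iso.hom_inv_id_assoc]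
      bicategory_coherence
    · have hβ : β = v₁ ◁ γ ≫ ((ρ_ v₁).inv ≫ αc.hom ≫ (ρ_ v₂).hom) ▷ g := by
        rw [hγ]; simp
      subst hβ
      simp [← whisker_exchange]
  · rintro γ δ ⟨e, s, t, hW, ε₁, ε₂, hc1, hc2⟩
    have hε : ε₁.hom = ε₂.hom := by
      have h1' : ε₁.hom ▷ 𝟙 a = ε₂.hom ▷ 𝟙 a := by simpa using hc1
      rw [Bicategory.whiskerRight_id, Bicategory.whiskerRight_id] at h1'
      simpa using h1'
    rw [← hε] at hc2
    have h2 : ε₁.hom ▷ f ≫ (ρ_ t).hom ▷ f ≫ t ◁ δ ≫ (ρ_ t).inv ▷ g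
        = (ρ_ s).hom ▷ f ≫ s ◁ γ ≫ (ρ_ s).inv ▷ g ≫ ε₁.hom ▷ g := by
      simpa using hc2
    have h3 : (ρ_ s).hom ▷ f ≫ s ◁ γ ≫ (ρ_ s).inv ▷ g ≫ ε₁.hom ▷ g
        = ε₁.hom ▷ f ≫ (ρ_ t).hom ▷ f ≫ t ◁ γ ≫ (ρ_ t).inv ▷ g := by
      simpa using whisker_exchange ε₁.hom γ
    have key : t ◁ γ = t ◁ δ := by
      have h4 := h2.trans h3
      rw [cancel_epi, cancel_epi, cancel_mono] at h4
      exact h4.symm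
    have hWs : W (s ≫ 𝟙 a) := h5 _ _ hW ⟨(ρ_ (s ≫ 𝟙 a)).symm⟩
    have hWt : W (t ≫ 𝟙 a) := h5 _ _ hWs ⟨ε₂.symm⟩
    have hWt' : W t := h5 t (t ≫ 𝟙 a) hWt ⟨(ρ_ t).symm⟩
    obtain ⟨η', -, huniq⟩ := hcoff t hWt' f g (t ◁ γ)
    exact (huniq γ rfl).trans (huniq δ key.symm).symm
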